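/- For fixed η ∈ ℝ, the free energy F(·,η) is sequentially lower semicontinuous with respect to weak L¹ convergence: if f_j ∈ P(S²) and f_j ⇀ f weakly in L¹(S²) with f ∈ P(S²), then liminf_{j→∞} F(f_j,η) ≥ F(f,η). -/

import Mathlib

/-
Common setting for the formalisation of
"An analysis of equilibria in dense nematic liquid crystals" (J. M. Taylor).

* `V3` is ℝ³ (as a Euclidean space), `sph` is the unit sphere S²,
  and `μS` is the 2-dimensional Hausdorff (surface) measure restricted to S².
* `IsProb f` says `f ∈ P(S²)`.
* `FE f η` is the free energy `F(f,η) ∈ ℝ ∪ {+∞}` (realised as `EReal`),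
  with the conventions `0 ln 0 = 0`, `0 ⬝ (+∞) = 0` and `-ln x = +∞` for `x ≤ 0`:
  the value is the real integral whenever the argument of the logarithm is a.e.
  positive on `{f ≠ 0}` and the integrand is integrable, and `+∞` otherwise.
-/

open MeasureTheory Matrix Filter
open scoped ENNReal Topology Classical

noncomputable section

abbrev V3 : Type := EuclideanSpace ℝ (Fin 3)

/-- The unit sphere S² in ℝ³. -/
def sph : Set V3 := Metric.sphere (0 : V3) 1

/-- The 2-dimensional Hausdorff (surface) measure on S². -/
def μS : Measure V3 := (μH[2]).restrict sph

abbrev Mat3 : Type := Matrix (Fin 3) (Fin 3) ℝ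

/-- Membership in Sym₀(3): real symmetric traceless 3×3 matrices. -/
def Sym0 (Q : Mat3) : Prop := Q.IsSymm ∧ Q.trace = 0

/-- The Frobenius inner product `A·B = trace (A*B)` (on symmetric matrices). -/
def mdot (A B : Mat3) : ℝ := (A * B).trace

/-- The quadratic form `p ↦ Qp·p`. -/
def qf (Q : Mat3) (p : V3) : ℝ := ∑ i, ∑ j, Q i j * p i * p j

/-- The smallest eigenvalue of a symmetric matrix, via Rayleigh quotients on S². -/
def vmin (Q : Mat3) : ℝ := ⨅ p : sph, qf Q (p : V3)

/-- `f ∈ P(S²)`. -/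
def IsProb (f : V3 → ℝ) : Prop :=
  Integrable f μS ∧ (∀ᵐ p ∂μS, 0 ≤ f p) ∧ ∫ p, f p ∂μS = 1

/-- The interaction term `p ↦ ∫_{S²} ((p·q)² − 1/3) f(q) dq`. -/
def Kf (f : V3 → ℝ) (p : V3) : ℝ :=
  ∫ q, ((∑ i, p i * q i) ^ 2 - 1 / 3) * f q ∂μS

/-- The free energy `F(f,η) ∈ ℝ ∪ {+∞}`. -/
def FE (f : V3 → ℝ) (η : ℝ) : EReal :=
  if (∀ᵐ p ∂μS, f p ≠ 0 → η < Kf f p) ∧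
      Integrable (fun p => f p * Real.log (f p) - f p * Real.log (Kf f p - η)) μS
  then ((∫ p, f p * Real.log (f p) - f p * Real.log (Kf f p - η) ∂μS : ℝ) : EReal)
  else ⊤

/-- The Q-tensor `Q(f) = ∫_{S²} (p⊗p − (1/3)I) f(p) dp`. -/
def Qten (f : V3 → ℝ) : Mat3 :=
  Matrix.of fun i j => ∫ p, f p * (p i * p j - if i = j then (1 : ℝ) / 3 else 0) ∂μS

/-- The macroscopic energy `J(Q,η) = inf_{f ∈ A(Q)} F(f,η)` (`= +∞` when `A(Q) = ∅`). -/
def Jfun (Q : Mat3) (η : ℝ) : EReal :=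
  sInf {y : EReal | ∃ f : V3 → ℝ, IsProb f ∧ Qten f = Q ∧ FE f η = y}

/-- The dual objective `D(Q,λ,η) = λ·Q − ln ∫_{S²} exp(λp·p) max(Qp·p − η, 0) dp`. -/
def Dob (Q lam : Mat3) (η : ℝ) : ℝ :=
  mdot lam Q - Real.log (∫ p, Real.exp (qf lam p) * max (qf Q p - η) 0 ∂μS)

/-- The effective domain of `J(·,η)`. -/
def domJ (η : ℝ) : Set Mat3 :=
  {Q : Mat3 | Sym0 Q ∧ -(1/3) < vmin Q ∧ η < mdot Q Q}

/-- The matrix `∫_{S²} (f(p)/(Qp·p − η)) (p⊗p − (1/3)I) dp` (integrand `0` where `f` vanishes,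
by the junk-value conventions of division in Lean). -/
def Mmat (f : V3 → ℝ) (Q : Mat3) (η : ℝ) : Mat3 :=
  Matrix.of fun i j =>
    ∫ p, f p / (qf Q p - η) * (p i * p j - if i = j then (1 : ℝ) / 3 else 0) ∂μS

/-- The entropy `∫_{S²} f ln f ∈ ℝ ∪ {+∞}`. -/
def EntE (f : V3 → ℝ) : EReal :=
  if Integrable (fun p => f p * Real.log (f p)) μS
  then ((∫ p, f p * Real.log (f p) ∂μS : ℝ) : EReal)
  else ⊤

/-- The Ball–Majumdar singular potential `ψ_s(Q) = inf_{f ∈ A(Q)} ∫ f ln f`. -/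
def psiS (Q : Mat3) : EReal :=
  sInf {y : EReal | ∃ f : V3 → ℝ, IsProb f ∧ Qten f = Q ∧ EntE f = y}

/-- `f` is an `L^p`-local minimiser of `F(·,η)`. -/
def LpLocMin (pp : ℝ≥0∞) (η : ℝ) (f : V3 → ℝ) : Prop :=
  FE f η < ⊤ ∧ ∃ ε : ℝ, 0 < ε ∧ ∀ g : V3 → ℝ, IsProb g →
    eLpNorm (g - f) pp μS < ENNReal.ofReal ε → FE f η ≤ FE g η


lemma measurableSet_sph : MeasurableSet sph :=
  (Metric.isClosed_sphere).measurableSet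

/-- cap parametrisation -/
def Fmap (i : Fin 3) (ε : ℝ) (u : ℝ × ℝ) : V3 :=
  (WithLp.equiv 2 (Fin 3 → ℝ)).symm
    (i.insertNth (α := fun _ => ℝ) (ε * Real.sqrt (1 - (u.1 ^ 2 + u.2 ^ 2))) ![u.1, u.2])

def capS : Set (ℝ × ℝ) := {u | u.1 ^ 2 + u.2 ^ 2 ≤ 2 / 3}

lemma sum_sq_eq_one {x : V3} (hx : x ∈ sph) : ∑ j, x j ^ 2 = 1 := by
  have h : ‖x‖ = 1 := by simpa [sph] using hx
  have h2 : ‖x‖ ^ 2 = 1 := by rw [h]; norm_num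
  rw [EuclideanSpace.norm_eq] at h2
  rw [Real.sq_sqrt (by positivity)] at h2
  simpa [Real.norm_eq_abs, sq_abs] using h2

lemma sph_subset_caps :
    sph ⊆ ⋃ i : Fin 3, (Fmap i 1 '' capS ∪ Fmap i (-1) '' capS) := by
  intro x hx
  have hsum : ∑ j, x j ^ 2 = 1 := sum_sq_eq_one hx
  have hex : ∃ i : Fin 3, 1 / 3 ≤ x i ^ 2 := by
    by_contra h
    push_neg at h
    have : ∑ j, x j ^ 2 < ∑ _j : Fin 3, (1 / 3 : ℝ) :=
      Finset.sum_lt_sum_of_nonempty (by simp) (fun j _ => h j)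
    simp [hsum] at this
  obtain ⟨i, hi⟩ := hex
  set u : ℝ × ℝ := (x (i.succAbove 0), x (i.succAbove 1)) with hu
  have hsplit : x i ^ 2 + (u.1 ^ 2 + u.2 ^ 2) = 1 := by
    rw [← hsum, Fin.sum_univ_succAbove (fun j => x j ^ 2) i]
    simp [hu, Fin.sum_univ_two]
  have hus : u ∈ capS := by
    simp only [capS, Set.mem_setOf_eq]
    linarith
  have hsq : Real.sqrt (1 - (u.1 ^ 2 + u.2 ^ 2)) = |x i| := by
    rw [show 1 - (u.1 ^ 2 + u.2 ^ 2) = x i ^ 2 by linarith]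
    exact Real.sqrt_sq_eq_abs _
  have key : ∀ ε : ℝ, ε * |x i| = x i → Fmap i ε u = x := by
    intro ε hε
    have h1 : (i.insertNth (α := fun _ => ℝ) (ε * Real.sqrt (1 - (u.1 ^ 2 + u.2 ^ 2)))
        ![u.1, u.2]) = (WithLp.equiv 2 (Fin 3 → ℝ)) x := by
      rw [hsq, hε]
      rw [Fin.insertNth_eq_iff]
      refine ⟨rfl, ?_⟩
      funext k
      fin_cases k <;> simp [hu, Fin.removeNth]
    unfold Fmap
    rw [h1]
    exact (WithLp.equiv 2 (Fin 3 → ℝ)).symm_apply_apply x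
  rcases le_or_gt 0 (x i) with hpos | hneg
  · refine Set.mem_iUnion.mpr ⟨i, Or.inl ⟨u, hus, key 1 ?_⟩⟩
    rw [one_mul, abs_of_nonneg hpos]
  · refine Set.mem_iUnion.mpr ⟨i, Or.inr ⟨u, hus, key (-1) ?_⟩⟩
    rw [abs_of_neg hneg]; ring



lemma sqrt_diff_le {a b : ℝ} (ha : 1/3 ≤ a) (hb : 1/3 ≤ b) :
    |Real.sqrt a - Real.sqrt b| ≤ |a - b| := by
  have h2 : (1:ℝ)/2 ≤ Real.sqrt a := by
    rw [show (1:ℝ)/2 = Real.sqrt (1/4) by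
      rw [show (1:ℝ)/4 = (1/2)^2 by norm_num, Real.sqrt_sq (by norm_num)]]
    exact Real.sqrt_le_sqrt (by linarith)
  have h3 : (1:ℝ)/2 ≤ Real.sqrt b := by
    rw [show (1:ℝ)/2 = Real.sqrt (1/4) by
      rw [show (1:ℝ)/4 = (1/2)^2 by norm_num, Real.sqrt_sq (by norm_num)]]
    exact Real.sqrt_le_sqrt (by linarith)
  have hm : (Real.sqrt a - Real.sqrt b) * (Real.sqrt a + Real.sqrt b) = a - b := by
    have := Real.mul_self_sqrt (by linarith : (0:ℝ) ≤ a)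
    have := Real.mul_self_sqrt (by linarith : (0:ℝ) ≤ b)
    ring_nf
    nlinarith
  calc |Real.sqrt a - Real.sqrt b|
      ≤ |Real.sqrt a - Real.sqrt b| * (Real.sqrt a + Real.sqrt b) := by
        nlinarith [abs_nonneg (Real.sqrt a - Real.sqrt b)]
    _ = |(Real.sqrt a - Real.sqrt b) * (Real.sqrt a + Real.sqrt b)| := by
        rw [abs_mul, abs_of_nonneg (by linarith : (0:ℝ) ≤ Real.sqrt a + Real.sqrt b)]
    _ = |a - b| := by rw [hm]

lemma Fmap_lipschitz (i : Fin 3) (ε : ℝ) (hε : |ε| = 1) :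
    LipschitzOnWith 5 (Fmap i ε) capS := by
  apply LipschitzOnWith.of_dist_le_mul
  intro u hu v hv
  set d := dist u v with hd
  have hd0 : 0 ≤ d := dist_nonneg
  have h1 : |u.1 - v.1| ≤ d := by
    rw [hd, Prod.dist_eq, ← Real.dist_eq]
    exact le_max_left _ _
  have h2 : |u.2 - v.2| ≤ d := by
    rw [hd, Prod.dist_eq, ← Real.dist_eq]
    exact le_max_right _ _
  have hub : u ∈ capS := hu
  have hvb : v ∈ capS := hv
  simp only [capS, Set.mem_setOf_eq] at hub hvb
  have hu1 : |u.1| ≤ 1 := by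
    rw [← sq_le_one_iff_abs_le_one]; nlinarith [sq_nonneg u.2]
  have hu2 : |u.2| ≤ 1 := by
    rw [← sq_le_one_iff_abs_le_one]; nlinarith [sq_nonneg u.1]
  have hv1 : |v.1| ≤ 1 := by
    rw [← sq_le_one_iff_abs_le_one]; nlinarith [sq_nonneg v.2]
  have hv2 : |v.2| ≤ 1 := by
    rw [← sq_le_one_iff_abs_le_one]; nlinarith [sq_nonneg v.1]
  set A := 1 - (u.1 ^ 2 + u.2 ^ 2) with hA
  set B := 1 - (v.1 ^ 2 + v.2 ^ 2) with hB
  have hAB : |A - B| ≤ 4 * d := by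
    have e1 : |u.1^2 - v.1^2| ≤ 2 * d := by
      rw [show u.1^2 - v.1^2 = (u.1 - v.1) * (u.1 + v.1) by ring, abs_mul]
      have : |u.1 + v.1| ≤ 2 := (abs_add_le _ _).trans (by linarith)
      nlinarith [abs_nonneg (u.1 - v.1)]
    have e2 : |u.2^2 - v.2^2| ≤ 2 * d := by
      rw [show u.2^2 - v.2^2 = (u.2 - v.2) * (u.2 + v.2) by ring, abs_mul]
      have : |u.2 + v.2| ≤ 2 := (abs_add_le _ _).trans (by linarith)
      nlinarith [abs_nonneg (u.2 - v.2)]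
    calc |A - B| = |(v.1^2 - u.1^2) + (v.2^2 - u.2^2)| := by rw [hA, hB]; ring_nf
      _ ≤ |v.1^2 - u.1^2| + |v.2^2 - u.2^2| := abs_add_le _ _
      _ ≤ 2 * d + 2 * d := by rw [abs_sub_comm (v.1^2), abs_sub_comm (v.2^2)]; linarith
      _ = 4 * d := by ring
  have hsq : |Real.sqrt A - Real.sqrt B| ≤ 4 * d := by
    refine le_trans (sqrt_diff_le ?_ ?_) hAB
    · rw [hA]; linarith
    · rw [hB]; linarith
  -- component identities
  have cu : ∀ w : ℝ × ℝ, Fmap i ε w i = ε * Real.sqrt (1 - (w.1 ^ 2 + w.2 ^ 2)) := by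
    intro w; simp [Fmap]
  have ck : ∀ (w : ℝ × ℝ) (k : Fin 2), Fmap i ε w (i.succAbove k) = ![w.1, w.2] k := by
    intro w k; simp [Fmap]
  have hdist : dist (Fmap i ε u) (Fmap i ε v) =
      Real.sqrt (∑ j, dist (Fmap i ε u j) (Fmap i ε v j) ^ 2) := by
    exact EuclideanSpace.dist_eq _ _
  rw [hdist]
  have hsum : ∑ j, dist (Fmap i ε u j) (Fmap i ε v j) ^ 2 ≤ (5 * d)^2 := by
    rw [Fin.sum_univ_succAbove (fun j => dist (Fmap i ε u j) (Fmap i ε v j) ^ 2) i]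
    rw [Fin.sum_univ_two]
    rw [cu u, cu v, ck u, ck v, ck u, ck v]
    simp only [Matrix.cons_val_zero, Matrix.cons_val_one, Matrix.head_cons]
    rw [Real.dist_eq, Real.dist_eq, Real.dist_eq]
    have e0 : |ε * Real.sqrt (1 - (u.1^2 + u.2^2)) - ε * Real.sqrt (1 - (v.1^2 + v.2^2))|
        = |Real.sqrt A - Real.sqrt B| := by
      rw [← hA, ← hB, show ε * Real.sqrt A - ε * Real.sqrt B = ε * (Real.sqrt A - Real.sqrt B) by ring,
        abs_mul, hε, one_mul]
    rw [e0]
    nlinarith [abs_nonneg (Real.sqrt A - Real.sqrt B), sq_abs (Real.sqrt A - Real.sqrt B),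
      sq_abs (u.1 - v.1), sq_abs (u.2 - v.2), abs_nonneg (u.1 - v.1), abs_nonneg (u.2 - v.2)]
  have hcoe : ((5 : NNReal) : ℝ) * dist u v = 5 * d := by rw [hd]; norm_num
  rw [hcoe]
  calc Real.sqrt (∑ j, dist (Fmap i ε u j) (Fmap i ε v j) ^ 2)
      ≤ Real.sqrt ((5 * d)^2) := Real.sqrt_le_sqrt hsum
    _ = 5 * d := Real.sqrt_sq (by linarith)

lemma cap_image_lt_top (i : Fin 3) (ε : ℝ) (hε : |ε| = 1) :
    μH[2] (Fmap i ε '' capS) < ⊤ := by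
  have h := (Fmap_lipschitz i ε hε).hausdorffMeasure_image_le (by norm_num : (0:ℝ) ≤ 2)
  refine lt_of_le_of_lt h ?_
  apply ENNReal.mul_lt_top
  · exact ENNReal.rpow_lt_top_of_nonneg (by norm_num) (by simp)
  · have : (μH[2] : Measure (ℝ × ℝ)) = volume := MeasureTheory.hausdorffMeasure_prod_real
    rw [this]
    have hsub : capS ⊆ Metric.closedBall (0 : ℝ × ℝ) 1 := by
      intro u hq
      simp only [capS, Set.mem_setOf_eq] at hq
      rw [Metric.mem_closedBall, dist_zero_right, Prod.norm_def]
      have h1 : |u.1| ≤ 1 := by rw [← sq_le_one_iff_abs_le_one]; nlinarith [sq_nonneg u.2]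
      have h2 : |u.2| ≤ 1 := by rw [← sq_le_one_iff_abs_le_one]; nlinarith [sq_nonneg u.1]
      simp [Real.norm_eq_abs, h1, h2]
    exact lt_of_le_of_lt (measure_mono hsub)
      ((isCompact_closedBall _ _).measure_lt_top)

lemma sph_meas_lt_top : μH[2] sph < ⊤ := by
  refine lt_of_le_of_lt (measure_mono sph_subset_caps) ?_
  refine lt_of_le_of_lt (measure_iUnion_fintype_le _ _) ?_
  apply ENNReal.sum_lt_top.mpr
  intro i _
  refine lt_of_le_of_lt (measure_union_le _ _) ?_
  exact ENNReal.add_lt_top.mpr ⟨cap_image_lt_top i 1 (by norm_num),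
    cap_image_lt_top i (-1) (by norm_num)⟩

instance : IsFiniteMeasure μS := by
  constructor
  rw [μS, Measure.restrict_apply_univ]
  exact sph_meas_lt_top


lemma ae_mem_sph : ∀ᵐ q ∂μS, q ∈ sph := ae_restrict_mem measurableSet_sph

lemma coord_abs_le_one {x : V3} (hx : x ∈ sph) (i : Fin 3) : |x i| ≤ 1 := by
  have h := sum_sq_eq_one hx
  have h1 : x i ^ 2 ≤ 1 := by
    rw [← h]
    exact Finset.single_le_sum (fun j _ => sq_nonneg (x j)) (Finset.mem_univ i)
  rwa [← sq_le_one_iff_abs_le_one]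

lemma inner_sq_le (p q : V3) : (∑ i, p i * q i) ^ 2 ≤ (∑ i, p i ^ 2) * (∑ i, q i ^ 2) :=
  Finset.sum_mul_sq_le_sq_mul_sq _ _ _

/-- kernel bound on the sphere -/
lemma kernel_abs_le_one {p q : V3} (hp : p ∈ sph) (hq : q ∈ sph) :
    |(∑ i, p i * q i) ^ 2 - 1 / 3| ≤ 1 := by
  have h1 : (∑ i, p i * q i) ^ 2 ≤ 1 := by
    have := inner_sq_le p q
    rw [sum_sq_eq_one hp, sum_sq_eq_one hq] at this
    linarith
  have h2 : (0:ℝ) ≤ (∑ i, p i * q i) ^ 2 := sq_nonneg _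
  rw [abs_le]; constructor <;> linarith

/-- integrability of the moment integrands -/
lemma mom_integrable {f : V3 → ℝ} (hf : Integrable f μS) (i i' : Fin 3) :
    Integrable (fun q => q i * q i' * f q) μS := by
  refine Integrable.mono' hf.abs ?_ ?_
  · exact ((by fun_prop : Measurable fun q : V3 => q i * q i').aestronglyMeasurable).mul
      hf.aestronglyMeasurable
  · filter_upwards [ae_mem_sph] with q hq
    rw [Real.norm_eq_abs, abs_mul, abs_mul]
    have h1 := coord_abs_le_one hq i
    have h2 := coord_abs_le_one hq i'
    have h3 : |q i| * |q i'| ≤ 1 :=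
      mul_le_one₀ h1 (abs_nonneg _) h2
    calc |q i| * |q i'| * |f q| ≤ 1 * |f q| :=
          mul_le_mul_of_nonneg_right h3 (abs_nonneg _)
      _ = |f q| := one_mul _

lemma kf_integrand_integrable {f : V3 → ℝ} (hf : Integrable f μS) (p : V3) :
    Integrable (fun q => ((∑ i, p i * q i) ^ 2 - 1 / 3) * f q) μS := by
  refine Integrable.mono' (hf.abs.const_mul ((∑ i, p i ^ 2) + 1/3)) ?_ ?_
  · apply AEStronglyMeasurable.mul ?_ hf.aestronglyMeasurable
    refine Continuous.aestronglyMeasurable ?_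
    have : Continuous (fun q : V3 => ∑ i, p i * q i) := by
      apply continuous_finset_sum
      intro i _
      exact continuous_const.mul (by fun_prop : Continuous fun q : V3 => q i)
    continuity
  · filter_upwards [ae_mem_sph] with q hq
    rw [Real.norm_eq_abs, abs_mul]
    have h1 : (∑ i, p i * q i) ^ 2 ≤ (∑ i, p i ^ 2) := by
      have := inner_sq_le p q
      rw [sum_sq_eq_one hq] at this
      linarith
    have h2 : |(∑ i, p i * q i) ^ 2 - 1/3| ≤ (∑ i, p i ^ 2) + 1/3 := by
      rw [abs_le]
      have := sq_nonneg (∑ i, p i * q i)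
      constructor <;> nlinarith [sq_nonneg (p 0)]
    nlinarith [abs_nonneg (f q), abs_nonneg ((∑ i, p i * q i) ^ 2 - 1/3),
      sq_nonneg (∑ i, p i ^ 2)]

/-- polynomial formula for Kf -/
lemma Kf_eq {f : V3 → ℝ} (hf : Integrable f μS) (p : V3) :
    Kf f p = (∑ i, ∑ i', p i * p i' * (∫ q, q i * q i' * f q ∂μS))
      - 1 / 3 * ∫ q, f q ∂μS := by
  have heq : ∀ q : V3, ((∑ i, p i * q i) ^ 2 - 1 / 3) * f q
      = (∑ i, ∑ i', p i * p i' * (q i * q i' * f q)) - 1/3 * f q := by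
    intro q
    have hsq : (∑ i, p i * q i) ^ 2 = ∑ i, ∑ i', (p i * q i) * (p i' * q i') := by
      rw [sq, Finset.sum_mul_sum]
    rw [hsq, sub_mul, Finset.sum_mul]
    congr 1
    · apply Finset.sum_congr rfl
      intro i _
      rw [Finset.sum_mul]
      apply Finset.sum_congr rfl
      intro i' _
      ring
  rw [Kf]
  rw [integral_congr_ae (Filter.Eventually.of_forall heq)]
  rw [integral_sub ?_ ?_]
  · congr 1
    · rw [integral_finset_sum]
      · apply Finset.sum_congr rfl
        intro i _
        rw [integral_finset_sum]
        · apply Finset.sum_congr rfl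
          intro i' _
          exact integral_const_mul _ _
        · intro i' _
          exact ((mom_integrable hf i i').const_mul _)
      · intro i _
        apply integrable_finset_sum
        intro i' _
        exact ((mom_integrable hf i i').const_mul _)
    · exact integral_const_mul _ _
  · apply integrable_finset_sum
    intro i _
    apply integrable_finset_sum
    intro i' _
    exact ((mom_integrable hf i i').const_mul _)
  · exact hf.const_mul _

lemma Kf_continuous {f : V3 → ℝ} (hf : Integrable f μS) : Continuous (Kf f) := by
  have : Kf f = fun p => (∑ i, ∑ i', p i * p i' * (∫ q, q i * q i' * f q ∂μS))
      - 1 / 3 * ∫ q, f q ∂μS := funext (Kf_eq hf)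
  rw [this]
  apply Continuous.sub ?_ continuous_const
  apply continuous_finset_sum
  intro i _
  apply continuous_finset_sum
  intro i' _
  exact ((by fun_prop : Continuous fun q : V3 => q i * q i').mul continuous_const)

lemma Kf_measurable {f : V3 → ℝ} (hf : Integrable f μS) : Measurable (Kf f) :=
  (Kf_continuous hf).measurable

/-- bound on Kf for probability densities -/
lemma Kf_abs_le_one {f : V3 → ℝ} (hf : IsProb f) :
    ∀ᵐ p ∂μS, |Kf f p| ≤ 1 := by
  filter_upwards [ae_mem_sph] with p hp
  rw [Kf, ← Real.norm_eq_abs]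
  have hb : ∫ q, ‖((∑ i, p i * q i) ^ 2 - 1 / 3) * f q‖ ∂μS ≤ ∫ q, f q ∂μS := by
    apply integral_mono_ae (kf_integrand_integrable hf.1 p).norm hf.1
    filter_upwards [ae_mem_sph, hf.2.1] with q hq hq0
    rw [Real.norm_eq_abs, abs_mul]
    have h1 := kernel_abs_le_one hp hq
    rw [abs_of_nonneg hq0]
    nlinarith [abs_nonneg (f q)]
  calc ‖∫ q, ((∑ i, p i * q i) ^ 2 - 1 / 3) * f q ∂μS‖
      ≤ ∫ q, ‖((∑ i, p i * q i) ^ 2 - 1 / 3) * f q‖ ∂μS := norm_integral_le_integral_norm _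
    _ ≤ ∫ q, f q ∂μS := hb
    _ = 1 := hf.2.2

/-- pointwise convergence of Kf along a weakly convergent sequence -/
lemma Kf_tendsto {f : ℕ → V3 → ℝ} {fl : V3 → ℝ}
    (hf : ∀ j, Integrable (f j) μS) (hfl : Integrable fl μS)
    (hweak : ∀ g : V3 → ℝ, Measurable g → (∃ C : ℝ, ∀ p, |g p| ≤ C) →
      Tendsto (fun j => ∫ p, f j p * g p ∂μS) atTop (𝓝 (∫ p, fl p * g p ∂μS)))
    (p : V3) :
    Tendsto (fun j => Kf (f j) p) atTop (𝓝 (Kf fl p)) := by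
  set g : V3 → ℝ := fun q => min ((∑ i, p i * q i) ^ 2) (∑ i, p i ^ 2) - 1 / 3 with hg
  have hgm : Measurable g := by
    apply Measurable.sub ?_ measurable_const
    apply Measurable.min ?_ measurable_const
    exact (Finset.measurable_sum _ fun i _ =>
      (measurable_const.mul (by fun_prop : Measurable fun q : V3 => q i))).pow_const 2
  have hgb : ∃ C : ℝ, ∀ q, |g q| ≤ C := by
    refine ⟨(∑ i, p i ^ 2) + 1/3, fun q => ?_⟩
    rw [hg, abs_le]
    have h1 : (0:ℝ) ≤ min ((∑ i, p i * q i) ^ 2) (∑ i, p i ^ 2) :=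
      le_min (sq_nonneg _) (Finset.sum_nonneg fun i _ => sq_nonneg _)
    have h2 : min ((∑ i, p i * q i) ^ 2) (∑ i, p i ^ 2) ≤ ∑ i, p i ^ 2 := min_le_right _ _
    constructor <;> simp only [Set.mem_setOf_eq] <;> nlinarith
  have hcongr : ∀ (h : V3 → ℝ), ∫ q, h q * g q ∂μS
      = ∫ q, ((∑ i, p i * q i) ^ 2 - 1 / 3) * h q ∂μS := by
    intro h
    apply integral_congr_ae
    filter_upwards [ae_mem_sph] with q hq
    have hmin : min ((∑ i, p i * q i) ^ 2) (∑ i, p i ^ 2) = (∑ i, p i * q i) ^ 2 := by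
      apply min_eq_left
      have := inner_sq_le p q
      rw [sum_sq_eq_one hq] at this
      linarith
    rw [hg]
    simp only
    rw [hmin]
    ring
  have := hweak g hgm hgb
  rw [hcongr fl] at this
  apply Tendsto.congr ?_ this
  intro j
  exact hcongr (f j)


/-- clamped optimiser -/
def gval (x α : ℝ) (n : ℕ) : ℝ :=
  if x = 0 then -(n:ℝ) else if α ≤ 0 then (n:ℝ)
    else max (-(n:ℝ)) (min (n:ℝ) (Real.log (x / α)))

/-- dual integrand -/
def hval (x α t : ℝ) : ℝ := x * t - max α 0 * Real.exp t + x

lemma gval_abs_le (x α : ℝ) (n : ℕ) : |gval x α n| ≤ n := by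
  unfold gval
  split_ifs with h1 h2
  · simp
  · simp
  · rw [abs_le]
    push_neg at h2
    constructor
    · exact le_max_left _ _
    · exact max_le (by linarith [Nat.cast_nonneg (α := ℝ) n]) (min_le_left _ _)

/-- the Fenchel–Young type inequality -/
lemma key_ineq (x α t : ℝ) (hx : 0 ≤ x) (hpos : x ≠ 0 → 0 < α) :
    hval x α t ≤ x * Real.log x - x * Real.log α := by
  rcases eq_or_lt_of_le hx with h0 | h0
  · rw [hval, ← h0]
    simp only [zero_mul, zero_sub, zero_add, sub_zero, zero_mul, sub_zero]
    have : 0 ≤ max α 0 * Real.exp t := mul_nonneg (le_max_right _ _) (Real.exp_pos t).le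
    linarith
  · have hα : 0 < α := hpos (ne_of_gt h0)
    rw [hval, max_eq_left hα.le]
    have key : (t - Real.log x + Real.log α) + 1 ≤ Real.exp (t - Real.log x + Real.log α) :=
      Real.add_one_le_exp _
    have hexp : Real.exp (t - Real.log x + Real.log α) = Real.exp t * α / x := by
      rw [Real.exp_add, Real.exp_sub, Real.exp_log h0, Real.exp_log hα]
      ring
    rw [hexp] at key
    have := mul_le_mul_of_nonneg_left key h0.le
    have hx' : x * (Real.exp t * α / x) = α * Real.exp t := by
      field_simp
    nlinarith [Real.exp_pos t]

lemma psi_mono {x α s s' : ℝ} (hx : 0 < x) (hα : 0 < α)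
    (hss : s ≤ s') (hs' : s' ≤ Real.log (x / α)) :
    hval x α s ≤ hval x α s' := by
  rw [hval, hval, max_eq_left hα.le]
  have h1 : Real.exp (s') ≤ x / α := by
    rw [← Real.exp_log (div_pos hx hα)]
    exact Real.exp_le_exp.mpr hs'
  have h2 : Real.exp s' - Real.exp s ≤ Real.exp s' * (s' - s) := by
    have := Real.add_one_le_exp (s - s')
    have hp := Real.exp_pos s'
    have : Real.exp s' * ((s - s') + 1) ≤ Real.exp s' * Real.exp (s - s') :=
      mul_le_mul_of_nonneg_left (Real.add_one_le_exp _) hp.le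
    rw [← Real.exp_add] at this
    have hss' : s' + (s - s') = s := by ring
    rw [hss'] at this
    nlinarith
  have h3 : α * (Real.exp s' - Real.exp s) ≤ x * (s' - s) := by
    have e1 : α * (Real.exp s' - Real.exp s) ≤ α * (Real.exp s' * (s' - s)) :=
      mul_le_mul_of_nonneg_left h2 hα.le
    have e2 : α * Real.exp s' ≤ x := by
      have := mul_le_mul_of_nonneg_left h1 hα.le
      field_simp at this
      linarith
    nlinarith [Real.exp_pos s']
  linarith [h3]

lemma psi_anti {x α s s' : ℝ} (hx : 0 < x) (hα : 0 < α)
    (hss : s ≤ s') (hs : Real.log (x / α) ≤ s) :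
    hval x α s' ≤ hval x α s := by
  rw [hval, hval, max_eq_left hα.le]
  have h1 : x / α ≤ Real.exp s := by
    rw [← Real.exp_log (div_pos hx hα)]
    exact Real.exp_le_exp.mpr hs
  have h2 : Real.exp s * (s' - s) ≤ Real.exp s' - Real.exp s := by
    have hp := Real.exp_pos s
    have : Real.exp s * ((s' - s) + 1) ≤ Real.exp s * Real.exp (s' - s) :=
      mul_le_mul_of_nonneg_left (Real.add_one_le_exp _) hp.le
    rw [← Real.exp_add] at this
    have hss' : s + (s' - s) = s' := by ring
    rw [hss'] at this
    nlinarith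
  have h3 : x * (s' - s) ≤ α * (Real.exp s' - Real.exp s) := by
    have e2 : x ≤ α * Real.exp s := by
      have := mul_le_mul_of_nonneg_left h1 hα.le
      field_simp at this
      linarith
    nlinarith [sub_nonneg.mpr hss]
  linarith [h3]

lemma hval_gval_mono (x α : ℝ) (hx : 0 ≤ x) :
    Monotone (fun n => hval x α (gval x α n)) := by
  apply monotone_nat_of_le_succ
  intro n
  rcases eq_or_lt_of_le hx with h0 | h0
  · simp only [gval, ← h0, if_pos rfl, hval]
    simp only [zero_mul, zero_sub, zero_add, sub_zero, neg_add_rev]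
    have h1 : Real.exp (-((n:ℝ)+1)) ≤ Real.exp (-(n:ℝ)) := by
      apply Real.exp_le_exp.mpr; push_cast; linarith
    have h2 : 0 ≤ max α 0 := le_max_right _ _
    push_cast
    nlinarith
  · have hne : x ≠ 0 := ne_of_gt h0
    rcases le_or_gt α 0 with hα | hα
    · simp only [gval, if_neg hne, if_pos hα, hval, max_eq_right hα]
      simp only [zero_mul, zero_sub, sub_zero, zero_mul]
      push_cast
      nlinarith
    · simp only [gval, if_neg hne, if_neg (not_le.mpr hα)]
      set t := Real.log (x / α) with ht
      rcases le_or_gt 0 t with htp | htn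
      · have e1 : ∀ m : ℕ, max (-(m:ℝ)) (min (m:ℝ) t) = min (m:ℝ) t := by
          intro m
          apply max_eq_right
          have : (0:ℝ) ≤ min (m:ℝ) t := le_min (Nat.cast_nonneg m) htp
          linarith [Nat.cast_nonneg (α := ℝ) m]
        rw [e1 n, e1 (n+1)]
        apply psi_mono h0 hα
        · exact min_le_min (by push_cast; linarith) (le_refl t)
        · exact min_le_right _ _
      · have e1 : ∀ m : ℕ, max (-(m:ℝ)) (min (m:ℝ) t) = max (-(m:ℝ)) t := by
          intro m
          congr 1
          apply min_eq_right
          linarith [Nat.cast_nonneg (α := ℝ) m]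
        rw [e1 n, e1 (n+1)]
        apply psi_anti h0 hα
        · exact max_le_max (by push_cast; linarith) (le_refl t)
        · exact le_max_right _ _

lemma hval_gval_tendsto (x α : ℝ) (hx : 0 ≤ x) (hpos : x ≠ 0 → 0 < α) :
    Tendsto (fun n => hval x α (gval x α n)) atTop
      (𝓝 (x * Real.log x - x * Real.log α)) := by
  rcases eq_or_lt_of_le hx with h0 | h0
  · simp only [gval, ← h0, if_pos rfl, hval]
    simp only [zero_mul, zero_sub, zero_add, sub_zero]
    have : Tendsto (fun n : ℕ => Real.exp (-(n:ℝ))) atTop (𝓝 0) := by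
      apply Real.tendsto_exp_atBot.comp
      exact tendsto_neg_atBot_iff.mpr tendsto_natCast_atTop_atTop
    have h2 := this.const_mul (-(max α 0))
    simpa using h2
  · have hne : x ≠ 0 := ne_of_gt h0
    have hα : 0 < α := hpos hne
    set t := Real.log (x / α) with ht
    obtain ⟨N, hN⟩ := exists_nat_ge |t|
    have hev : ∀ n ≥ N, hval x α (gval x α n) = x * Real.log x - x * Real.log α := by
      intro n hn
      have hn' : |t| ≤ (n:ℝ) := le_trans hN (by exact_mod_cast Nat.cast_le.mpr hn)
      rw [abs_le] at hn'
      have : gval x α n = t := by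
        simp only [gval, if_neg hne, if_neg (not_le.mpr hα)]
        rw [min_eq_right hn'.2, max_eq_right hn'.1]
      rw [this, hval, max_eq_left hα.le, ht, Real.exp_log (div_pos h0 hα),
        Real.log_div hne (ne_of_gt hα)]
      field_simp
      ring
    apply Tendsto.congr' ?_ tendsto_const_nhds
    filter_upwards [eventually_ge_atTop N] with n hn
    exact (hev n hn).symm

lemma hval_gval_tendsto_top (x α : ℝ) (hx : 0 < x) (hα : α ≤ 0) :
    Tendsto (fun n => hval x α (gval x α n)) atTop atTop := by
  have hne : x ≠ 0 := ne_of_gt hx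
  have heq : ∀ n : ℕ, hval x α (gval x α n) = x * n + x := by
    intro n
    simp only [gval, if_neg hne, if_pos hα, hval, max_eq_right hα]
    ring
  simp only [heq]
  apply tendsto_atTop_add_const_right
  exact (tendsto_natCast_atTop_atTop (R := ℝ)).const_mul_atTop hx


lemma helper_iSup_ofReal_eq_top {u : ℕ → ℝ} (hu : Tendsto u atTop atTop) :
    ⨆ n, ENNReal.ofReal (u n) = ⊤ := by
  rw [iSup_eq_top]
  intro b hb
  obtain ⟨n, hn⟩ := (tendsto_atTop.mp hu (b.toReal + 1)).exists
  refine ⟨n, ?_⟩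
  rw [← ENNReal.ofReal_toReal hb.ne]
  apply ENNReal.ofReal_lt_ofReal_iff (by linarith [ENNReal.toReal_nonneg (a := b)]) |>.mpr
  linarith

lemma helper_toReal_tendsto_atTop {e : ℕ → ℝ≥0∞} (he : ∀ n, e n ≠ ⊤)
    (h : Tendsto e atTop (𝓝 ⊤)) :
    Tendsto (fun n => (e n).toReal) atTop atTop := by
  rw [tendsto_atTop]
  intro b
  have : ∀ᶠ n in atTop, ENNReal.ofReal b ≤ e n :=
    h.eventually (eventually_ge_nhds (by simp [ENNReal.ofReal_lt_top]))
  filter_upwards [this] with n hn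
  exact (ENNReal.ofReal_le_iff_le_toReal (he n)).mp hn

lemma helper_coe_le_liminf {cj : ℕ → ℝ} {x : ℝ} {L : ℕ → EReal}
    (hc : Tendsto cj atTop (𝓝 x)) (h : ∀ j, (cj j : EReal) ≤ L j) :
    (x : EReal) ≤ liminf L atTop := by
  have h1 : liminf (fun j => ((cj j : ℝ) : EReal)) atTop = (x : EReal) :=
    Tendsto.liminf_eq ((continuous_coe_real_ereal.tendsto x).comp hc)
  rw [← h1]
  exact liminf_le_liminf (Eventually.of_forall h)



lemma dual_pieces {h : V3 → ℝ} (hh : IsProb h) (η : ℝ) {g : V3 → ℝ}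
    (hgm : Measurable g) {n : ℝ} (hgb : ∀ p, |g p| ≤ n) :
    Integrable (fun p => h p * g p) μS ∧
    Integrable (fun p => max (Kf h p - η) 0 * Real.exp (g p)) μS ∧
    Integrable (fun p => h p * g p - max (Kf h p - η) 0 * Real.exp (g p) + h p) μS ∧
    ∫ p, (h p * g p - max (Kf h p - η) 0 * Real.exp (g p) + h p) ∂μS
      = ∫ p, h p * g p ∂μS - ∫ p, max (Kf h p - η) 0 * Real.exp (g p) ∂μS
        + ∫ p, h p ∂μS := by
  have i1 : Integrable (fun p => h p * g p) μS := by
    have := Integrable.bdd_mul hh.1 hgm.aestronglyMeasurable (Filter.Eventually.of_forall fun p => by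
      rw [Real.norm_eq_abs]; exact hgb p)
    exact this.congr (Filter.Eventually.of_forall fun p => mul_comm _ _)
  have i2 : Integrable (fun p => max (Kf h p - η) 0 * Real.exp (g p)) μS := by
    refine Integrable.mono' (integrable_const ((1 + |η|) * Real.exp n)) ?_ ?_
    · exact ((((Kf_measurable hh.1).sub measurable_const).max measurable_const).mul
        (Real.measurable_exp.comp hgm)).aestronglyMeasurable
    · filter_upwards [Kf_abs_le_one hh] with p hp
      rw [Real.norm_eq_abs, abs_mul, abs_of_nonneg (le_max_right _ _),
        abs_of_nonneg (Real.exp_pos _).le]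
      have e1 : max (Kf h p - η) 0 ≤ 1 + |η| := by
        apply max_le ?_ (by positivity)
        have h1 := (abs_le.mp hp).2
        have h2 := neg_abs_le η
        linarith
      have e2 : Real.exp (g p) ≤ Real.exp n :=
        Real.exp_le_exp.mpr (le_trans (le_abs_self _) (hgb p))
      have h0 : (0:ℝ) ≤ max (Kf h p - η) 0 := le_max_right _ _
      nlinarith [Real.exp_pos (g p)]
  have i3 : Integrable (fun p => h p * g p - max (Kf h p - η) 0 * Real.exp (g p)) μS :=
    i1.sub i2
  refine ⟨i1, i2, i3.add hh.1, ?_⟩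
  rw [integral_add i3 hh.1, integral_sub i1 i2]

lemma dual_le_FE {h : V3 → ℝ} (hh : IsProb h) (η : ℝ) {g : V3 → ℝ}
    (hgm : Measurable g) {n : ℝ} (hgb : ∀ p, |g p| ≤ n) :
    ((∫ p, (h p * g p - max (Kf h p - η) 0 * Real.exp (g p) + h p) ∂μS : ℝ) : EReal)
      ≤ FE h η := by
  rw [FE]
  split_ifs with hcond
  · rw [EReal.coe_le_coe_iff]
    apply integral_mono_ae (dual_pieces hh η hgm hgb).2.2.1 hcond.2
    filter_upwards [hh.2.1, hcond.1] with p hp0 hppos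
    have := key_ineq (h p) (Kf h p - η) (g p) hp0 (fun hne => sub_pos.mpr (hppos hne))
    simpa [hval] using this
  · exact le_top


/-- `F(·,η)` is sequentially weakly-L¹ lower semicontinuous on `P(S²)`. -/
theorem stmt_1 (η : ℝ) (f : ℕ → V3 → ℝ) (fl : V3 → ℝ)
    (hf : ∀ j, IsProb (f j)) (hfl : IsProb fl)
    (hweak : ∀ g : V3 → ℝ, Measurable g → (∃ C : ℝ, ∀ p, |g p| ≤ C) →
      Tendsto (fun j => ∫ p, f j p * g p ∂μS) atTop (𝓝 (∫ p, fl p * g p ∂μS))) :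
    FE fl η ≤ Filter.liminf (fun j => FE (f j) η) atTop := by
  classical
  obtain ⟨φ, hφsm, hφe⟩ := hfl.1.aestronglyMeasurable
  have hφm : Measurable φ := hφsm.measurable
  set G : ℕ → V3 → ℝ := fun n p => gval (φ p) (Kf fl p - η) n with hG_def
  have ham : Measurable (fun p => Kf fl p - η) := (Kf_measurable hfl.1).sub measurable_const
  have hGm : ∀ n, Measurable (G n) := by
    intro n
    have he : G n = fun p => if φ p = 0 then -(n:ℝ) else if Kf fl p - η ≤ 0 then (n:ℝ)
        else max (-(n:ℝ)) (min (n:ℝ) (Real.log (φ p / (Kf fl p - η)))) := rfl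
    rw [he]
    refine Measurable.ite (hφm (measurableSet_singleton 0)) measurable_const ?_
    refine Measurable.ite (measurableSet_le ham measurable_const) measurable_const ?_
    exact measurable_const.max (measurable_const.min (Real.measurable_log.comp (hφm.div ham)))
  have hGb : ∀ n (p : V3), |G n p| ≤ (n:ℝ) := fun n p => gval_abs_le _ _ n
  set L : ℕ → EReal := fun j => FE (f j) η with hL_def
  set c : ℕ → ℝ := fun n =>
    ∫ p, (fl p * G n p - max (Kf fl p - η) 0 * Real.exp (G n p) + fl p) ∂μS with hc_def
  -- Step B : each c n is below the liminf
  have stepB : ∀ n, ((c n : ℝ) : EReal) ≤ liminf L atTop := by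
    intro n
    set cj : ℕ → ℝ := fun j =>
      ∫ p, (f j p * G n p - max (Kf (f j) p - η) 0 * Real.exp (G n p) + f j p) ∂μS with hcj
    have hle : ∀ j, (cj j : EReal) ≤ L j := fun j =>
      dual_le_FE (hf j) η (hGm n) (hGb n)
    have T1 := hweak (G n) (hGm n) ⟨n, hGb n⟩
    have T2 : Tendsto (fun j => ∫ p, max (Kf (f j) p - η) 0 * Real.exp (G n p) ∂μS) atTop
        (𝓝 (∫ p, max (Kf fl p - η) 0 * Real.exp (G n p) ∂μS)) := by
      apply tendsto_integral_of_dominated_convergence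
        (bound := fun _ => (1 + |η|) * Real.exp (n:ℝ))
      · intro j
        exact ((((Kf_measurable (hf j).1).sub measurable_const).max measurable_const).mul
          (Real.measurable_exp.comp (hGm n))).aestronglyMeasurable
      · exact integrable_const _
      · intro j
        filter_upwards [Kf_abs_le_one (hf j)] with p hp
        rw [Real.norm_eq_abs, abs_mul, abs_of_nonneg (le_max_right _ _),
          abs_of_nonneg (Real.exp_pos _).le]
        have e1 : max (Kf (f j) p - η) 0 ≤ 1 + |η| := by
          apply max_le ?_ (by positivity)
          have h1 := (abs_le.mp hp).2
          have h2 := neg_abs_le η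
          linarith
        have e2 : Real.exp (G n p) ≤ Real.exp (n:ℝ) :=
          Real.exp_le_exp.mpr (le_trans (le_abs_self _) (hGb n p))
        have h0 : (0:ℝ) ≤ max (Kf (f j) p - η) 0 := le_max_right _ _
        nlinarith [Real.exp_pos (G n p)]
      · apply Filter.Eventually.of_forall
        intro p
        exact (((Kf_tendsto (fun j => (hf j).1) hfl.1 hweak p).sub_const η).max
          tendsto_const_nhds).mul_const _
    have T3 : Tendsto (fun j => ∫ p, f j p ∂μS) atTop (𝓝 (1:ℝ)) := by
      have he : (fun j => ∫ p, f j p ∂μS) = fun _ => (1:ℝ) := funext fun j => (hf j).2.2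
      rw [he]; exact tendsto_const_nhds
    have Tall := (T1.sub T2).add T3
    have hcje : ∀ j, cj j = (∫ p, f j p * G n p ∂μS)
        - (∫ p, max (Kf (f j) p - η) 0 * Real.exp (G n p) ∂μS) + ∫ p, f j p ∂μS :=
      fun j => (dual_pieces (hf j) η (hGm n) (hGb n)).2.2.2
    have hcn : c n = (∫ p, fl p * G n p ∂μS)
        - (∫ p, max (Kf fl p - η) 0 * Real.exp (G n p) ∂μS) + 1 := by
      simp only [hc_def]
      rw [(dual_pieces hfl η (hGm n) (hGb n)).2.2.2, hfl.2.2]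
    have hTc : Tendsto cj atTop (𝓝 (c n)) := by
      rw [hcn]
      exact Tendsto.congr (fun j => (hcje j).symm) Tall
    exact helper_coe_le_liminf hTc hle
  -- a.e. facts
  have haefl : ∀ᵐ p ∂μS, fl p = φ p ∧ 0 ≤ φ p := by
    filter_upwards [hφe, hfl.2.1] with p h1 h2
    exact ⟨h1, h1 ▸ h2⟩
  set hv : ℕ → V3 → ℝ := fun n p => hval (φ p) (Kf fl p - η) (G n p) with hhv
  have hhvm : ∀ n, Measurable (hv n) := by
    intro n
    apply Measurable.add ?_ hφm
    apply Measurable.sub (hφm.mul (hGm n))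
    exact ((ham.max measurable_const).mul (Real.measurable_exp.comp (hGm n)))
  set H : ℕ → V3 → ℝ := fun n p => hv n p - hv 0 p with hH
  have hHm : ∀ n, Measurable (H n) := fun n => (hhvm n).sub (hhvm 0)
  have hmono : ∀ᵐ p ∂μS, Monotone (fun n => hv n p) := by
    filter_upwards [haefl] with p hp
    have := hval_gval_mono (φ p) (Kf fl p - η) hp.2
    simpa [hhv, hG_def] using this
  have hfunae : ∀ n, (fun p => fl p * G n p - max (Kf fl p - η) 0 * Real.exp (G n p) + fl p)
      =ᵐ[μS] hv n := by
    intro n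
    filter_upwards [haefl] with p hp
    simp only [hhv, hval]
    rw [hp.1]
  have hfl_int : ∀ n, Integrable (fun p =>
      fl p * G n p - max (Kf fl p - η) 0 * Real.exp (G n p) + fl p) μS :=
    fun n => (dual_pieces hfl η (hGm n) (hGb n)).2.2.1
  have hhv_int : ∀ n, Integrable (hv n) μS := fun n => ((hfl_int n).congr (hfunae n))
  have hH_int : ∀ n, Integrable (H n) μS := fun n => (hhv_int n).sub (hhv_int 0)
  have hHnn : ∀ n, 0 ≤ᵐ[μS] H n := by
    intro n
    filter_upwards [hmono] with p hp
    simp only [hH]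
    exact sub_nonneg.mpr (hp (Nat.zero_le n))
  set F : V3 → ℝ≥0∞ := fun p => ⨆ n, ENNReal.ofReal (H n p) with hF
  set Λ : ℝ≥0∞ := ∫⁻ p, F p ∂μS with hΛdef
  have hMCT : Tendsto (fun n => ∫⁻ p, ENNReal.ofReal (H n p) ∂μS) atTop (𝓝 Λ) := by
    apply lintegral_tendsto_of_tendsto_of_monotone
    · exact fun n => (ENNReal.measurable_ofReal.comp (hHm n)).aemeasurable
    · filter_upwards [hmono] with p hp
      intro m k hmk
      apply ENNReal.ofReal_le_ofReal
      simp only [hH]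
      linarith [hp hmk]
    · filter_upwards [hmono] with p hp
      apply tendsto_atTop_iSup
      intro m k hmk
      apply ENNReal.ofReal_le_ofReal
      simp only [hH]
      linarith [hp hmk]
  have e2 : ∀ m, ∫ p, hv m p ∂μS = c m := by
    intro m
    simp only [hc_def]
    exact (integral_congr_ae (hfunae m)).symm
  have hc_eq : ∀ n, c n = ∫ p, H n p ∂μS + c 0 := by
    intro n
    have e3 : ∫ p, H n p ∂μS = c n - c 0 := by
      simp only [hH]
      rw [integral_sub (hhv_int n) (hhv_int 0), e2 n, e2 0]
    rw [e3]; ring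
  have hlim_int : ∀ n, ∫ p, H n p ∂μS = (∫⁻ p, ENNReal.ofReal (H n p) ∂μS).toReal :=
    fun n => integral_eq_lintegral_of_nonneg_ae (hHnn n) (hHm n).aestronglyMeasurable
  by_cases hΛtop : Λ = ⊤
  · -- divergent case : liminf = ⊤
    have hne : ∀ n, ∫⁻ p, ENNReal.ofReal (H n p) ∂μS ≠ ⊤ := by
      intro n
      have hb : ∫⁻ p, ENNReal.ofReal (H n p) ∂μS ≤ ∫⁻ p, ‖H n p‖₊ ∂μS := by
        apply lintegral_mono
        intro p
        show ENNReal.ofReal (H n p) ≤ (‖H n p‖₊ : ℝ≥0∞)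
        calc ENNReal.ofReal (H n p) ≤ ENNReal.ofReal |H n p| :=
              ENNReal.ofReal_le_ofReal (le_abs_self _)
          _ = (‖H n p‖₊ : ℝ≥0∞) := (Real.enorm_eq_ofReal_abs _).symm
      exact (lt_of_le_of_lt hb (hH_int n).2).ne
    have hH_top : Tendsto (fun n => ∫ p, H n p ∂μS) atTop atTop := by
      have := helper_toReal_tendsto_atTop hne (hΛtop ▸ hMCT)
      apply Tendsto.congr ?_ this
      intro n
      exact (hlim_int n).symm
    have hc_top : Tendsto c atTop atTop := by
      have h4 := tendsto_atTop_add_const_right atTop (c 0) hH_top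
      apply Tendsto.congr ?_ h4
      intro n
      exact (hc_eq n).symm
    have htop : Tendsto (fun n => ((c n : ℝ) : EReal)) atTop (𝓝 ⊤) := by
      rw [EReal.tendsto_nhds_top_iff_real]
      intro x
      filter_upwards [tendsto_atTop.mp hc_top (x + 1)] with m hm
      exact_mod_cast EReal.coe_lt_coe_iff.mpr (by linarith)
    calc FE fl η ≤ (⊤ : EReal) := le_top
      _ ≤ liminf L atTop := le_of_tendsto htop (Filter.Eventually.of_forall stepB)
  · -- finite case
    have hTnull : μS {p | φ p ≠ 0 ∧ Kf fl p - η ≤ 0} = 0 := by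
      by_contra hTpos
      set T : Set V3 := {p | φ p ≠ 0 ∧ Kf fl p - η ≤ 0} with hT_def
      have hTmeas : MeasurableSet T :=
        ((hφm (measurableSet_singleton 0)).compl).inter (measurableSet_le ham measurable_const)
      have hFtop : ∀ᵐ p ∂μS, p ∈ T → F p = ⊤ := by
        filter_upwards [haefl] with p hp hpT
        have hφpos : 0 < φ p := lt_of_le_of_ne hp.2 (Ne.symm hpT.1)
        have hdiv := hval_gval_tendsto_top (φ p) (Kf fl p - η) hφpos hpT.2
        simp only [hF]
        apply helper_iSup_ofReal_eq_top
        have hdiv2 : Tendsto (fun n => hv n p) atTop atTop := by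
          apply Tendsto.congr ?_ hdiv
          intro m
          simp [hhv, hG_def]
        have h5 := tendsto_atTop_add_const_right atTop (-(hv 0 p)) hdiv2
        apply Tendsto.congr ?_ h5
        intro m
        simp [hH, sub_eq_add_neg]
      have hcontra : Λ = ⊤ := by
        rw [eq_top_iff]
        calc (⊤:ℝ≥0∞) = ⊤ * μS T := (ENNReal.top_mul hTpos).symm
          _ = ∫⁻ _ in T, (⊤:ℝ≥0∞) ∂μS := (setLIntegral_const T ⊤).symm
          _ = ∫⁻ p in T, F p ∂μS := by
              apply lintegral_congr_ae
              have hmem : ∀ᵐ p ∂μS.restrict T, p ∈ T := ae_restrict_mem hTmeas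
              filter_upwards [hmem, ae_restrict_of_ae hFtop] with p h1 h2
              exact (h2 h1).symm
          _ ≤ ∫⁻ p, F p ∂μS := setLIntegral_le_lintegral T F
          _ = Λ := rfl
      exact hΛtop hcontra
    have hTae : ∀ᵐ p ∂μS, ¬(φ p ≠ 0 ∧ Kf fl p - η ≤ 0) := by
      rw [ae_iff]
      simpa [not_not] using hTnull
    set Hinf : V3 → ℝ := fun p =>
      (φ p * Real.log (φ p) - φ p * Real.log (Kf fl p - η)) - hv 0 p with hHinf
    have hHtend : ∀ᵐ p ∂μS, Tendsto (fun n => H n p) atTop (𝓝 (Hinf p)) := by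
      filter_upwards [haefl, hTae] with p hp hpT
      have hpos : φ p ≠ 0 → 0 < Kf fl p - η := by
        intro hne
        by_contra hle
        exact hpT ⟨hne, not_lt.mp hle⟩
      have h6 := hval_gval_tendsto (φ p) (Kf fl p - η) hp.2 hpos
      have h7 : Tendsto (fun n => hv n p) atTop
          (𝓝 (φ p * Real.log (φ p) - φ p * Real.log (Kf fl p - η))) := by
        apply Tendsto.congr ?_ h6
        intro m
        simp [hhv, hG_def]
      have h8 := h7.sub_const (hv 0 p)
      apply Tendsto.congr ?_ h8
      intro m
      simp [hH, hHinf]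
    have hHinf_m : Measurable Hinf :=
      ((hφm.mul (Real.measurable_log.comp hφm)).sub
        (hφm.mul (Real.measurable_log.comp ham))).sub (hhvm 0)
    have hF_ae : F =ᵐ[μS] fun p => ENNReal.ofReal (Hinf p) := by
      filter_upwards [hmono, hHtend] with p hp1 hp2
      simp only [hF]
      apply iSup_eq_of_tendsto
      · intro m k hmk
        apply ENNReal.ofReal_le_ofReal
        simp only [hH]
        linarith [hp1 hmk]
      · exact (ENNReal.continuous_ofReal.tendsto _).comp hp2
    have hΛ_eq : Λ = ∫⁻ p, ENNReal.ofReal (Hinf p) ∂μS := lintegral_congr_ae hF_ae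
    have hHinf_nn : 0 ≤ᵐ[μS] Hinf := by
      filter_upwards [hmono, hHtend] with p hp1 hp2
      have h9 : ∀ n, 0 ≤ H n p := by
        intro n
        simp only [hH]
        exact sub_nonneg.mpr (hp1 (Nat.zero_le n))
      exact ge_of_tendsto hp2 (Filter.Eventually.of_forall h9)
    have hHinf_int : Integrable Hinf μS := by
      refine ⟨hHinf_m.aestronglyMeasurable, ?_⟩
      rw [hasFiniteIntegral_iff_ofReal hHinf_nn, ← hΛ_eq]
      exact lt_top_iff_ne_top.mpr hΛtop
    have hIH : Tendsto (fun n => ∫ p, H n p ∂μS) atTop (𝓝 (∫ p, Hinf p ∂μS)) := by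
      have h10 : ∫ p, Hinf p ∂μS = Λ.toReal := by
        rw [integral_eq_lintegral_of_nonneg_ae hHinf_nn hHinf_m.aestronglyMeasurable, ← hΛ_eq]
      rw [h10]
      have h11 := (ENNReal.tendsto_toReal hΛtop).comp hMCT
      apply Tendsto.congr ?_ h11
      intro n
      exact (hlim_int n).symm
    have hc_tend : Tendsto c atTop (𝓝 (∫ p, Hinf p ∂μS + c 0)) := by
      have h12 := hIH.add_const (c 0)
      apply Tendsto.congr ?_ h12
      intro n
      exact (hc_eq n).symm
    have hpos_ae : ∀ᵐ p ∂μS, fl p ≠ 0 → η < Kf fl p := by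
      filter_upwards [haefl, hTae] with p hp hpT hne
      have h13 : φ p ≠ 0 := by rw [← hp.1]; exact hne
      by_contra hle
      exact hpT ⟨h13, by linarith [not_lt.mp hle]⟩
    have hIeq : (fun p => fl p * Real.log (fl p) - fl p * Real.log (Kf fl p - η))
        =ᵐ[μS] fun p => Hinf p + hv 0 p := by
      filter_upwards [haefl] with p hp
      simp only [hHinf]
      rw [hp.1]
      ring
    have hIint : Integrable (fun p => fl p * Real.log (fl p)
        - fl p * Real.log (Kf fl p - η)) μS :=
      (hHinf_int.add (hhv_int 0)).congr hIeq.symm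
    have hFEval : FE fl η = ((∫ p, Hinf p ∂μS + c 0 : ℝ) : EReal) := by
      rw [FE, if_pos ⟨hpos_ae, hIint⟩]
      congr 1
      rw [integral_congr_ae hIeq, integral_add hHinf_int (hhv_int 0), e2 0]
    rw [hFEval]
    have hfin : Tendsto (fun n => ((c n : ℝ) : EReal)) atTop
        (𝓝 ((∫ p, Hinf p ∂μS + c 0 : ℝ) : EReal)) :=
      (continuous_coe_real_ereal.tendsto _).comp hc_tend
    exact le_of_tendsto hfin (Filter.Eventually.of_forall stepB)
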